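/- For any prime p > 2 and any c in F_p^* with c ≠ 1, Σ_{u=1}^{p-1} K(u)·K(cu) = -p - 1, where K denotes the Kloosterman sum over F_p. -/

import Mathlib

open Finset

/-- The Kloosterman sum over the prime field `F_p`. -/
noncomputable def kloosterman (p : ℕ) [Fact p.Prime] (u : ZMod p) : ℂ :=
  ∑ x ∈ (Finset.univ \ {0} : Finset (ZMod p)),
    Complex.exp (2 * Real.pi * Complex.I * ((x + u * x⁻¹).val : ℂ) / p)

noncomputable def psi (p : ℕ) (a : ZMod p) : ℂ :=
  Complex.exp (2 * Real.pi * Complex.I * (a.val : ℂ) / p)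

lemma psi_eq_pow (p : ℕ) [Fact p.Prime] (a : ZMod p) :
    psi p a = Complex.exp (2 * Real.pi * Complex.I / p) ^ a.val := by
  rw [psi, ← Complex.exp_nat_mul]
  ring_nf

lemma psi_zero (p : ℕ) [Fact p.Prime] : psi p 0 = 1 := by
  simp [psi]

lemma psi_add (p : ℕ) [Fact p.Prime] (a b : ZMod p) :
    psi p (a + b) = psi p a * psi p b := by
  have hζ : IsPrimitiveRoot (Complex.exp (2 * Real.pi * Complex.I / p)) p :=
    Complex.isPrimitiveRoot_exp p (Fact.out : p.Prime).ne_zero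
  simp only [psi_eq_pow, ← pow_add, ZMod.val_add]
  conv_rhs => rw [← Nat.mod_add_div (a.val + b.val) p, pow_add, pow_mul, hζ.pow_eq_one,
    one_pow, mul_one]

lemma sum_psi (p : ℕ) [Fact p.Prime] : ∑ a : ZMod p, psi p a = 0 := by
  have hp1 : 1 < p := (Fact.out : p.Prime).one_lt
  have hζ : IsPrimitiveRoot (Complex.exp (2 * Real.pi * Complex.I / p)) p :=
    Complex.isPrimitiveRoot_exp p (by omega)
  have h : ∑ a : ZMod p, psi p a
      = ∑ k ∈ Finset.range p, Complex.exp (2 * Real.pi * Complex.I / p) ^ k := by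
    refine Finset.sum_nbij' (fun a => ZMod.val a) (fun k => (k : ZMod p)) ?_ ?_ ?_ ?_ ?_
    · intro a _
      exact Finset.mem_range.mpr (ZMod.val_lt a)
    · intro k _; exact Finset.mem_univ _
    · intro a _; simp [ZMod.natCast_val, ZMod.cast_id]
    · intro k hk; exact ZMod.val_cast_of_lt (Finset.mem_range.mp hk)
    · intro a _; exact psi_eq_pow p a
  rw [h, hζ.geom_sum_eq_zero hp1]

lemma sum_psi_mul (p : ℕ) [Fact p.Prime] (t : ZMod p) :
    ∑ a : ZMod p, psi p (a * t) = if t = 0 then (p : ℂ) else 0 := by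
  rcases eq_or_ne t 0 with rfl | ht
  · simp [psi_zero, Finset.card_univ]
  · rw [if_neg ht, ← sum_psi p]
    exact Fintype.sum_equiv (Equiv.mulRight₀ t ht) _ _ (fun a => rfl)

lemma sum_psi_S (p : ℕ) [Fact p.Prime] (t : ZMod p) :
    ∑ a ∈ (Finset.univ \ {0} : Finset (ZMod p)), psi p (a * t)
      = (if t = 0 then (p : ℂ) else 0) - 1 := by
  rw [Finset.sdiff_singleton_eq_erase,
    Finset.sum_erase_eq_sub (Finset.mem_univ (0 : ZMod p)), sum_psi_mul, zero_mul, psi_zero]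

theorem sum_kloosterman_mul (p : ℕ) [Fact p.Prime] (hp : 2 < p) (c : ZMod p)
    (hc0 : c ≠ 0) (hc1 : c ≠ 1) :
    ∑ u ∈ (Finset.univ \ {0} : Finset (ZMod p)), kloosterman p u * kloosterman p (c * u) =
      -(p : ℂ) - 1 := by
  set S : Finset (ZMod p) := (Finset.univ \ {0}) with hS
  have hmemS : ∀ x : ZMod p, x ∈ S ↔ x ≠ 0 := by
    intro x; simp [hS]
  have hK : ∀ u : ZMod p, kloosterman p u = ∑ x ∈ S, psi p (x + u * x⁻¹) := fun u => rfl
  have step1 : ∑ u ∈ S, kloosterman p u * kloosterman p (c * u)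
      = ∑ x ∈ S, ∑ y ∈ S, psi p (x + y) * ((if x⁻¹ + c * y⁻¹ = 0 then (p:ℂ) else 0) - 1) := by
    simp_rw [hK, Finset.sum_mul_sum]
    rw [Finset.sum_comm]
    refine Finset.sum_congr rfl (fun x hx => ?_)
    rw [Finset.sum_comm]
    refine Finset.sum_congr rfl (fun y hy => ?_)
    rw [← sum_psi_S p (x⁻¹ + c * y⁻¹), Finset.mul_sum]
    refine Finset.sum_congr rfl (fun u hu => ?_)
    rw [← psi_add, ← psi_add]
    congr 1
    ring
  rw [step1]
  have hsum1 : ∑ x ∈ S, psi p x = -1 := by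
    have h := sum_psi_S p 1
    simp only [mul_one, if_neg (one_ne_zero : (1:ZMod p) ≠ 0)] at h
    rw [hS, h]; ring
  have split : ∀ x ∈ S, ∑ y ∈ S, psi p (x + y) * ((if x⁻¹ + c * y⁻¹ = 0 then (p:ℂ) else 0) - 1)
      = (p : ℂ) * psi p (x * (1 - c)) - psi p x * (-1) := by
    intro x hx
    have hx0 : x ≠ 0 := (hmemS x).mp hx
    simp_rw [mul_sub, mul_one]
    rw [Finset.sum_sub_distrib]
    congr 1
    · rw [Finset.sum_eq_single (-(c * x))]
      · have hcond : x⁻¹ + c * (-(c * x))⁻¹ = 0 := by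
          field_simp
          ring
        rw [if_pos hcond]
        have he : x + -(c * x) = x * (1 - c) := by ring
        rw [he]; ring
      · intro y hy hne
        have hy0 : y ≠ 0 := (hmemS y).mp hy
        have hcond : x⁻¹ + c * y⁻¹ ≠ 0 := by
          intro h
          apply hne
          field_simp at h
          linear_combination h
        simp [hcond]
      · intro habs
        exfalso
        exact habs ((hmemS _).mpr (by simp [hc0, hx0]))
    · simp_rw [psi_add, ← Finset.mul_sum, hsum1]
  rw [Finset.sum_congr rfl split, Finset.sum_sub_distrib, ← Finset.mul_sum, ← Finset.sum_mul,
    hsum1]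
  have h1c : (1 : ZMod p) - c ≠ 0 := by
    intro h
    apply hc1
    linear_combination -h
  have : ∑ x ∈ S, psi p (x * (1 - c)) = -1 := by
    rw [sum_psi_S p (1 - c), if_neg h1c, zero_sub]
  rw [this]
  ring
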